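/- In the Mal'cev–Neumann division ring D = K((G)), where G = ⊕_{i≥1} ℤ ordered lexicographically acts on K = ℚ(√p₁, √p₂, ...) by g·√pᵢ = (-1)^{gᵢ}√pᵢ, the center of D equals ℚ((H)), where H = {g² : g ∈ G} is the subgroup of squares. -/

import Mathlib

noncomputable section

/-- The subfield `K = ℚ(√p₀, √p₁, …)` of `ℝ` generated by the square roots of the
primes `p i`. -/
def sqrtField (p : ℕ → ℕ) : Subfield ℝ :=
  Subfield.closure (Set.range fun i => Real.sqrt (p i))

/-- The underlying additive group of Mal'cev–Neumann series `K((G))`, where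
`G = ⊕_{i≥1} ℤ` is ordered lexicographically: Hahn series over `Lex (ℕ →₀ ℤ)` with
coefficients in `K`. -/
abbrev MalcevNeumann (p : ℕ → ℕ) := HahnSeries (Lex (ℕ →₀ ℤ)) (sqrtField p)

/-- The twisted (crossed product) Mal'cev–Neumann multiplication
`(α · β)_g = ∑_{u + v = g} α_u · σ(u)(β_v)`, where `σ` is the action of `G` on `K`. -/
def tmul (p : ℕ → ℕ) (σ : (ℕ →₀ ℤ) → (sqrtField p →+* sqrtField p))
    (α β : MalcevNeumann p) : MalcevNeumann p where
  coeff g := ∑ ij ∈ Finset.antidiagonal α.isPWO_support β.isPWO_support g,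
      α.coeff ij.1 * σ (ofLex ij.1) (β.coeff ij.2)
  isPWO_support' := by
    apply (α.isPWO_support.add β.isPWO_support).mono
    intro g hg
    obtain ⟨ij, hij, -⟩ := Finset.exists_ne_zero_of_sum_ne_zero hg
    rw [Finset.mem_antidiagonal] at hij
    exact hij.2.2 ▸ Set.add_mem_add hij.1 hij.2.1

namespace Aux

variable (p : ℕ → ℕ)

/-- the generator `√pᵢ` as an element of `K`. -/
def ys (i : ℕ) : sqrtField p := ⟨Real.sqrt (p i), Subfield.subset_closure ⟨i, rfl⟩⟩

lemma ys_coe (i : ℕ) : ((ys p i : sqrtField p) : ℝ) = Real.sqrt (p i) := rfl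

lemma ys_ne_zero (hp : ∀ i, (p i).Prime) (i : ℕ) : ys p i ≠ 0 := by
  intro h
  have : ((ys p i : sqrtField p) : ℝ) = 0 := by rw [h]; rfl
  rw [ys_coe] at this
  have : (p i : ℝ) = 0 := by
    have := congrArg (· ^ 2) this
    simpa [Real.sq_sqrt (by positivity : (0:ℝ) ≤ (p i : ℝ))] using this
  exact_mod_cast (hp i).pos.ne' (by exact_mod_cast this)

lemma ys_sq (i : ℕ) : (ys p i) ^ 2 = (((p i : ℚ)) : sqrtField p) := by
  apply Subtype.ext
  push_cast [ys_coe]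
  rw [Real.sq_sqrt (by positivity : (0:ℝ) ≤ (p i : ℝ))]

/-- real monomial -/
def Mon (k : ℕ →₀ ℕ) : ℝ := k.prod fun i e => Real.sqrt (p i) ^ e

/-- monomial in `K` -/
def mon (k : ℕ →₀ ℕ) : sqrtField p := k.prod fun i e => ys p i ^ e

lemma mon_coe (k : ℕ →₀ ℕ) : ((mon p k : sqrtField p) : ℝ) = Mon p k := by
  have := map_finsuppProd ((sqrtField p).subtype) k (fun i e => ys p i ^ e)
  simp only [Subfield.coe_subtype] at this
  rw [mon, Mon, this]
  simp [ys_coe]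

lemma Mon_mul (k l : ℕ →₀ ℕ) : Mon p k * Mon p l = Mon p (k + l) := by
  rw [Mon, Mon, Mon, Finsupp.prod_add_index (by simp) (by intro a b₁ b₂ b₃; rw [pow_add])]

lemma Mon_zero : Mon p 0 = 1 := by simp [Mon]

lemma Mon_single (i : ℕ) : Mon p (Finsupp.single i 1) = Real.sqrt (p i) := by
  simp [Mon, Finsupp.prod_single_index]

end Aux

open Aux in
section
variable (p : ℕ → ℕ) (hp : ∀ i, (p i).Prime)

lemma integral_sqrt (i : ℕ) : IsIntegral ℚ (Real.sqrt (p i)) := by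
  refine ⟨Polynomial.X ^ 2 - Polynomial.C (p i : ℚ), ?_, ?_⟩
  · apply Polynomial.monic_X_pow_sub_C _ (by norm_num)
  · simp [Polynomial.eval₂, Real.sq_sqrt (by positivity : (0:ℝ) ≤ (p i : ℝ))]

lemma integral_of_mem_adjoin {x : ℝ}
    (hx : x ∈ Algebra.adjoin ℚ (Set.range fun i => Real.sqrt (p i))) : IsIntegral ℚ x := by
  have hx' : x ∈ Subring.closure (Set.range (algebraMap ℚ ℝ) ∪ Set.range fun i => Real.sqrt (p i)) := by
    rw [← Algebra.adjoin_eq_ring_closure]; exact hx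
  refine IsIntegral.of_mem_closure' _ ?_ x hx'
  rintro y (⟨q, rfl⟩ | ⟨i, rfl⟩)
  · exact isIntegral_algebraMap
  · exact integral_sqrt p i

lemma mem_adjoin (x : sqrtField p) :
    (x : ℝ) ∈ Algebra.adjoin ℚ (Set.range fun i => Real.sqrt (p i)) := by
  obtain ⟨x, hx⟩ := x
  show x ∈ _
  induction hx using Subfield.closure_induction with
  | mem z hz => exact Algebra.subset_adjoin hz
  | one => exact one_mem _
  | add a b ha hb iha ihb => exact add_mem iha ihb
  | neg a ha iha => exact neg_mem iha
  | mul a b ha hb iha ihb => exact mul_mem iha ihb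
  | inv a ha iha =>
      rcases eq_or_ne a 0 with rfl | h0
      · simpa using zero_mem (Algebra.adjoin ℚ (Set.range fun i => Real.sqrt (p i)))
      · exact Subalgebra.inv_mem_of_algebraic (Algebra.adjoin ℚ _)
          (x := ⟨a, iha⟩) ((integral_of_mem_adjoin p iha).isAlgebraic)

lemma adjoin_le_span :
    Subalgebra.toSubmodule (Algebra.adjoin ℚ (Set.range fun i => Real.sqrt (p i)))
      ≤ Submodule.span ℚ (Set.range (Mon p)) := by
  rw [Algebra.adjoin_eq_span]
  apply Submodule.span_mono
  intro x hx
  induction hx using Submonoid.closure_induction with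
  | mem z hz => obtain ⟨i, rfl⟩ := hz; exact ⟨Finsupp.single i 1, Mon_single p i⟩
  | one => exact ⟨0, Mon_zero p⟩
  | mul a b ha hb iha ihb =>
      obtain ⟨k, rfl⟩ := iha; obtain ⟨l, rfl⟩ := ihb
      exact ⟨k + l, (Mon_mul p k l).symm⟩

lemma exists_rep (x : sqrtField p) :
    ∃ c : (ℕ →₀ ℕ) →₀ ℚ, x = c.sum fun k q => (q : sqrtField p) * mon p k := by
  have h1 : (x : ℝ) ∈ Submodule.span ℚ (Set.range (Mon p)) :=
    adjoin_le_span p (mem_adjoin p x)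
  rw [Finsupp.mem_span_range_iff_exists_finsupp] at h1
  obtain ⟨c, hc⟩ := h1
  refine ⟨c, ?_⟩
  apply Subtype.ext
  rw [← hc]
  have := map_finsuppSum ((sqrtField p).subtype) c (fun k q => (q : sqrtField p) * mon p k)
  simp only [Subfield.coe_subtype] at this
  rw [this]
  refine Finsupp.sum_congr fun k hk => ?_
  push_cast [mon_coe]
  rw [Rat.smul_def]

set_option maxRecDepth 8000
section Sigma
open Aux
variable (p : ℕ → ℕ) (σ : (ℕ →₀ ℤ) → (sqrtField p →+* sqrtField p))

lemma sigma_ys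
    (hσsqrt : ∀ (g : ℕ →₀ ℤ) (i : ℕ) (y : sqrtField p), (y : ℝ) = Real.sqrt (p i) →
      ((σ g y : sqrtField p) : ℝ) = (-1 : ℝ) ^ (g i) * Real.sqrt (p i))
    (g : ℕ →₀ ℤ) (i : ℕ) :
    σ g (ys p i) = ((-1 : sqrtField p) ^ (g i)) * ys p i := by
  apply Subtype.ext
  rw [hσsqrt g i (ys p i) rfl]
  rw [eq_comm]
  have e1 : ((((-1 : sqrtField p) ^ (g i)) * ys p i : sqrtField p) : ℝ)
      = (sqrtField p).subtype (((-1 : sqrtField p) ^ (g i)) * ys p i) := rfl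
  rw [e1, map_mul, map_zpow₀, map_neg, map_one]
  rfl

lemma sigma_even
    (hσsqrt : ∀ (g : ℕ →₀ ℤ) (i : ℕ) (y : sqrtField p), (y : ℝ) = Real.sqrt (p i) →
      ((σ g y : sqrtField p) : ℝ) = (-1 : ℝ) ^ (g i) * Real.sqrt (p i))
    (h : ℕ →₀ ℤ) (x : sqrtField p) : σ (h + h) x = x := by
  obtain ⟨x, hx⟩ := x
  induction hx using Subfield.closure_induction with
  | mem z hz =>
      obtain ⟨i, rfl⟩ := hz
      apply Subtype.ext
      rw [hσsqrt (h + h) i _ rfl]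
      have : Even ((h + h) i) := by rw [Finsupp.add_apply]; exact ⟨h i, rfl⟩
      rw [this.neg_one_zpow, one_mul]
  | one => exact map_one _
  | add a b ha hb iha ihb =>
      have e : (⟨a + b, add_mem ha hb⟩ : sqrtField p) = ⟨a, ha⟩ + ⟨b, hb⟩ := rfl
      rw [e, map_add, iha, ihb]
  | neg a ha iha =>
      have e : (⟨-a, neg_mem ha⟩ : sqrtField p) = -⟨a, ha⟩ := rfl
      rw [e, map_neg, iha]
  | inv a ha iha =>
      have e : (⟨a⁻¹, inv_mem ha⟩ : sqrtField p) = (⟨a, ha⟩ : sqrtField p)⁻¹ := rfl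
      rw [e, map_inv₀, iha]
  | mul a b ha hb iha ihb =>
      have e : (⟨a * b, mul_mem ha hb⟩ : sqrtField p) = ⟨a, ha⟩ * ⟨b, hb⟩ := rfl
      rw [e, map_mul, iha, ihb]

/-- `g_T = ∑_{i ∈ T} eᵢ` -/
def gT (T : Finset ℕ) : ℕ →₀ ℤ := ∑ i ∈ T, Finsupp.single i 1

lemma gT_apply (T : Finset ℕ) (i : ℕ) : gT T i = if i ∈ T then 1 else 0 := by
  classical
  rw [gT, Finset.sum_apply']
  simp [Finsupp.single_apply]

lemma sigma_gT_ys
    (hσsqrt : ∀ (g : ℕ →₀ ℤ) (i : ℕ) (y : sqrtField p), (y : ℝ) = Real.sqrt (p i) →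
      ((σ g y : sqrtField p) : ℝ) = (-1 : ℝ) ^ (g i) * Real.sqrt (p i))
    (T : Finset ℕ) (i : ℕ) :
    σ (gT T) (ys p i) = if i ∈ T then -(ys p i) else ys p i := by
  rw [sigma_ys p σ hσsqrt, gT_apply]
  split <;> simp

lemma sigma_gT_mon
    (hσsqrt : ∀ (g : ℕ →₀ ℤ) (i : ℕ) (y : sqrtField p), (y : ℝ) = Real.sqrt (p i) →
      ((σ g y : sqrtField p) : ℝ) = (-1 : ℝ) ^ (g i) * Real.sqrt (p i))
    (T : Finset ℕ) (k : ℕ →₀ ℕ) :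
    σ (gT T) (mon p k) = (∏ i ∈ T, (-1 : sqrtField p) ^ (k i)) * mon p k := by
  classical
  have h1 := map_finsuppProd (σ (gT T)) k (fun i e => ys p i ^ e)
  rw [mon, h1]
  have h2 : (k.prod fun i e => σ (gT T) (ys p i ^ e)) =
      k.prod fun i e => (if i ∈ T then (-1 : sqrtField p) ^ e else 1) * ys p i ^ e := by
    refine Finsupp.prod_congr fun i hi => ?_
    rw [map_pow, sigma_gT_ys p σ hσsqrt]
    split
    · rw [neg_pow]
    · rw [one_mul]
  rw [h2, Finsupp.prod]
  rw [Finset.prod_mul_distrib]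
  congr 1
  rw [Finset.prod_ite_mem]
  refine Finset.prod_subset Finset.inter_subset_right fun i hiT hni => ?_
  have : k i = 0 := by
    by_contra hne
    exact hni (Finset.mem_inter.2 ⟨Finsupp.mem_support_iff.2 hne, hiT⟩)
  rw [this, pow_zero]
end Sigma

section Fixed
open Aux
variable (p : ℕ → ℕ) (σ : (ℕ →₀ ℤ) → (sqrtField p →+* sqrtField p))

lemma mon_even_rat (k : ℕ →₀ ℕ) (h : ∀ i, Even (k i)) :
    ∃ r : ℚ, mon p k = (r : sqrtField p) := by
  refine ⟨k.prod fun i e => (p i : ℚ) ^ (e / 2), ?_⟩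
  have hcast := map_finsuppProd (Rat.castHom (sqrtField p)) k (fun i e => (p i : ℚ) ^ (e / 2))
  simp only [map_pow, map_natCast] at hcast
  rw [mon]
  show _ = (Rat.castHom (sqrtField p)) (k.prod fun i e => (p i : ℚ) ^ (e / 2))
  rw [hcast]
  refine Finsupp.prod_congr fun i hi => ?_
  obtain ⟨r, hr⟩ := h i
  have h2 : k i = 2 * r := by omega
  rw [h2, pow_mul, ys_sq, Nat.mul_div_cancel_left r (by norm_num)]
  push_cast
  rfl

lemma fixed_rat (hp : ∀ i, (p i).Prime)
    (hσQ : ∀ (g : ℕ →₀ ℤ) (q : ℚ), σ g (q : sqrtField p) = (q : sqrtField p))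
    (hσsqrt : ∀ (g : ℕ →₀ ℤ) (i : ℕ) (y : sqrtField p), (y : ℝ) = Real.sqrt (p i) →
      ((σ g y : sqrtField p) : ℝ) = (-1 : ℝ) ^ (g i) * Real.sqrt (p i))
    (x : sqrtField p) (hx : ∀ g, σ g x = x) : ∃ q : ℚ, x = (q : sqrtField p) := by
  classical
  obtain ⟨c, hc⟩ := exists_rep p x
  set t := c.support with ht
  set s : Finset ℕ := t.biUnion fun k => k.support with hs
  set n := s.card with hn
  set P : (ℕ →₀ ℕ) → Prop := fun k => ∀ i ∈ s, Even (k i) with hP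
  have key : ∀ k ∈ t, ∑ T ∈ s.powerset, σ (gT T) (mon p k)
      = (if P k then (2 : sqrtField p) ^ n else 0) * mon p k := by
    intro k _
    rw [Finset.sum_congr rfl fun T (_ : T ∈ s.powerset) => sigma_gT_mon p σ hσsqrt T k,
      ← Finset.sum_mul]
    congr 1
    have h2 : ∑ T ∈ s.powerset, ∏ i ∈ T, (-1 : sqrtField p) ^ (k i)
        = ∏ i ∈ s, ((-1 : sqrtField p) ^ (k i) + 1) := by
      rw [Finset.prod_add]
      simp
    rw [h2]
    by_cases he : P k
    · rw [if_pos he]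
      rw [Finset.prod_congr rfl fun i hi =>
        (by rw [(he i hi).neg_one_pow] : ((-1 : sqrtField p) ^ (k i) + 1) = 1 + 1)]
      rw [Finset.prod_const]
      norm_num [hn]
    · rw [if_neg he]
      obtain ⟨i, his, hodd⟩ : ∃ i ∈ s, ¬ Even (k i) := by
        by_contra hno
        push_neg at hno
        exact he hno
      refine Finset.prod_eq_zero his ?_
      rw [(Nat.not_even_iff_odd.1 hodd).neg_one_pow]
      ring
  have hS1 : ∑ T ∈ s.powerset, σ (gT T) x = (2 : sqrtField p) ^ n * x := by
    rw [Finset.sum_congr rfl fun T (_ : T ∈ s.powerset) => hx (gT T), Finset.sum_const,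
      Finset.card_powerset, nsmul_eq_mul]
    push_cast
    rfl
  have hS2 : ∑ T ∈ s.powerset, σ (gT T) x
      = (2 : sqrtField p) ^ n * ∑ k ∈ t.filter P, (c k : sqrtField p) * mon p k := by
    calc ∑ T ∈ s.powerset, σ (gT T) x
        = ∑ T ∈ s.powerset, ∑ k ∈ t, (c k : sqrtField p) * σ (gT T) (mon p k) := by
          refine Finset.sum_congr rfl fun T _ => ?_
          conv_lhs => rw [hc]
          rw [Finsupp.sum, map_sum]
          exact Finset.sum_congr rfl fun k _ => by rw [map_mul, hσQ]
      _ = ∑ k ∈ t, (c k : sqrtField p) * ∑ T ∈ s.powerset, σ (gT T) (mon p k) := by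
          rw [Finset.sum_comm]
          exact Finset.sum_congr rfl fun k _ => (Finset.mul_sum _ _ _).symm
      _ = ∑ k ∈ t, (c k : sqrtField p) * ((if P k then (2 : sqrtField p) ^ n else 0) * mon p k) :=
          Finset.sum_congr rfl fun k hk => by rw [key k hk]
      _ = ∑ k ∈ t.filter P, (c k : sqrtField p) * ((2 : sqrtField p) ^ n * mon p k) := by
          rw [Finset.sum_filter]
          refine Finset.sum_congr rfl fun k _ => ?_
          split <;> simp
      _ = (2 : sqrtField p) ^ n * ∑ k ∈ t.filter P, (c k : sqrtField p) * mon p k := by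
          rw [Finset.mul_sum]
          exact Finset.sum_congr rfl fun k _ => by ring
  have h2n : ((2 : sqrtField p) ^ n) ≠ 0 := pow_ne_zero _ two_ne_zero
  have hxeq : x = ∑ k ∈ t.filter P, (c k : sqrtField p) * mon p k :=
    mul_left_cancel₀ h2n (by rw [← hS1, hS2])
  have hterm : ∀ k ∈ t.filter P, ∃ q : ℚ, (c k : sqrtField p) * mon p k = (q : sqrtField p) := by
    intro k hk
    have heven : ∀ i, Even (k i) := by
      intro i
      by_cases hi : i ∈ s
      · exact (Finset.mem_filter.1 hk).2 i hi
      · have h0 : k i = 0 := by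
          by_contra h0
          exact hi (Finset.mem_biUnion.2
            ⟨k, (Finset.mem_filter.1 hk).1, Finsupp.mem_support_iff.2 h0⟩)
        simp [h0]
    obtain ⟨r, hrr⟩ := mon_even_rat p k heven
    exact ⟨c k * r, by rw [hrr]; push_cast; ring⟩
  choose q hq using hterm
  refine ⟨∑ k ∈ (t.filter P).attach, q k.1 k.2, ?_⟩
  rw [hxeq, ← Finset.sum_attach (t.filter P) (fun k => (c k : sqrtField p) * mon p k),
    Finset.sum_congr rfl fun k _ => hq k.1 k.2]
  exact (map_sum (Rat.castHom (sqrtField p)) _ _).symm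
end Fixed

section Tmul
open Aux
variable (p : ℕ → ℕ) (σ : (ℕ →₀ ℤ) → (sqrtField p →+* sqrtField p))

lemma tmul_coeff (α β : MalcevNeumann p) (g : Lex (ℕ →₀ ℤ)) :
    (tmul p σ α β).coeff g = ∑ ij ∈ Finset.antidiagonal α.isPWO_support β.isPWO_support g,
      α.coeff ij.1 * σ (ofLex ij.1) (β.coeff ij.2) := rfl

lemma tmul_single_right (α : MalcevNeumann p) (h g : Lex (ℕ →₀ ℤ)) (c : sqrtField p) :
    (tmul p σ α (HahnSeries.single h c)).coeff g
      = α.coeff (g - h) * σ (ofLex (g - h)) c := by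
  classical
  rw [tmul_coeff]
  rcases eq_or_ne c 0 with rfl | hc
  · simp [HahnSeries.coeff_single]
  · have hrw : α.coeff (g - h) * σ (ofLex (g - h)) c
        = α.coeff (g - h) * σ (ofLex (g - h)) ((HahnSeries.single h c).coeff h) := by
      rw [HahnSeries.coeff_single_same]
    rw [hrw]
    apply Finset.sum_eq_single ((g - h, h) : Lex (ℕ →₀ ℤ) × Lex (ℕ →₀ ℤ))
    · rintro ⟨u, v⟩ hb hne
      rw [Finset.mem_antidiagonal] at hb
      have hv : v = h := HahnSeries.eq_of_mem_support_single hb.2.1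
      have hu : u = g - h := by
        rw [hv] at hb
        exact eq_sub_of_add_eq hb.2.2
      exact absurd (Prod.ext hu hv) hne
    · intro hnot
      have hmem : (g - h) + h = g := sub_add_cancel g h
      have : g - h ∉ α.support := by
        intro hsup
        exact hnot (Finset.mem_antidiagonal.2
          ⟨hsup, by rw [HahnSeries.support_single_of_ne hc]; exact rfl, hmem⟩)
      have h0 : α.coeff (g - h) = 0 := by
        by_contra hne
        exact this (HahnSeries.mem_support α (g - h) |>.2 hne)
      show α.coeff (g - h) * _ = 0
      rw [h0, zero_mul]
end Tmul

section Tmul2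
open Aux
variable (p : ℕ → ℕ) (σ : (ℕ →₀ ℤ) → (sqrtField p →+* sqrtField p))

lemma tmul_single_left (α : MalcevNeumann p) (h g : Lex (ℕ →₀ ℤ)) (c : sqrtField p) :
    (tmul p σ (HahnSeries.single h c) α).coeff g
      = c * σ (ofLex h) (α.coeff (g - h)) := by
  classical
  rw [tmul_coeff]
  rcases eq_or_ne c 0 with rfl | hc
  · simp [HahnSeries.coeff_single]
  · have hrw : c * σ (ofLex h) (α.coeff (g - h))
        = ((HahnSeries.single h c).coeff h) * σ (ofLex h) (α.coeff (g - h)) := by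
      rw [HahnSeries.coeff_single_same]
    rw [hrw]
    apply Finset.sum_eq_single ((h, g - h) : Lex (ℕ →₀ ℤ) × Lex (ℕ →₀ ℤ))
    · rintro ⟨u, v⟩ hb hne
      rw [Finset.mem_antidiagonal] at hb
      have hu : u = h := HahnSeries.eq_of_mem_support_single hb.1
      have hv : v = g - h := by
        rw [hu] at hb
        have h2 := hb.2.2
        simp only at h2
        rw [eq_comm, sub_eq_iff_eq_add, add_comm]
        exact h2.symm
      exact absurd (Prod.ext hu hv) hne
    · intro hnot
      have hmem : h + (g - h) = g := add_sub_cancel h g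
      have hsingle : h ∈ (HahnSeries.single h c).support := by
        rw [HahnSeries.support_single_of_ne hc]; exact rfl
      have hns : g - h ∉ α.support := fun hsup =>
        hnot (Finset.mem_antidiagonal.2 ⟨hsingle, hsup, hmem⟩)
      have h0 : α.coeff (g - h) = 0 := by
        by_contra hne
        exact hns (HahnSeries.mem_support α (g - h) |>.2 hne)
      show _ * σ (ofLex (h, g - h).1) (α.coeff (h, g - h).2) = 0
      rw [h0, map_zero, mul_zero]
end Tmul2



open Aux

/-- The center of the Mal'cev–Neumann division ring `D = K((G))`, where `G = ⊕ℤ` acts on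
`K = ℚ(√p₀, √p₁, …)` by `g • √pᵢ = (-1)^{gᵢ} √pᵢ`, equals `ℚ((H))`, where `H` is the
subgroup of squares of `G`: an element commutes with all of `D` iff its support consists
of squares and all its coefficients are rational. -/
theorem stmt_17 (p : ℕ → ℕ) (hp : ∀ i, (p i).Prime) (hmono : StrictMono p)
    (σ : (ℕ →₀ ℤ) → (sqrtField p →+* sqrtField p))
    (hσ0 : σ 0 = RingHom.id _)
    (hσadd : ∀ g h, σ (g + h) = (σ g).comp (σ h))
    (hσQ : ∀ (g : ℕ →₀ ℤ) (q : ℚ), σ g (q : sqrtField p) = (q : sqrtField p))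
    (hσsqrt : ∀ (g : ℕ →₀ ℤ) (i : ℕ) (y : sqrtField p), (y : ℝ) = Real.sqrt (p i) →
      ((σ g y : sqrtField p) : ℝ) = (-1 : ℝ) ^ (g i) * Real.sqrt (p i)) :
    {α : MalcevNeumann p | ∀ β, tmul p σ α β = tmul p σ β α} =
    {α : MalcevNeumann p | ∀ g ∈ α.support,
      (∃ h : ℕ →₀ ℤ, ofLex g = h + h) ∧ ∃ q : ℚ, α.coeff g = (q : sqrtField p)} := by
  ext α
  simp only [Set.mem_setOf_eq]
  constructor
  · intro hcomm g hg
    have hα : α.coeff g ≠ 0 := (HahnSeries.mem_support α g).1 hg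
    have hkey : ∀ (h : Lex (ℕ →₀ ℤ)) (c : sqrtField p),
        α.coeff g * σ (ofLex g) c = c * σ (ofLex h) (α.coeff g) := by
      intro h c
      have h1 := congrArg (fun β => β.coeff (g + h)) (hcomm (HahnSeries.single h c))
      rw [tmul_single_right p σ α h (g + h) c, tmul_single_left p σ α h (g + h) c,
        add_sub_cancel_right] at h1
      exact h1
    have hid : ∀ c : sqrtField p, σ (ofLex g) c = c := by
      intro c
      have h0 := hkey (toLex 0) c
      rw [show ofLex (toLex (0 : ℕ →₀ ℤ)) = 0 from rfl, hσ0] at h0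
      simp only [RingHom.id_apply] at h0
      refine mul_left_cancel₀ hα ?_
      rw [h0]; ring
    have hfix : ∀ h : ℕ →₀ ℤ, σ h (α.coeff g) = α.coeff g := by
      intro h
      have h1 := hkey (toLex h) 1
      rw [map_one, mul_one, one_mul] at h1
      exact h1.symm
    refine ⟨?_, fixed_rat p σ hp hσQ hσsqrt _ hfix⟩
    have heven : ∀ i, Even (ofLex g i) := by
      intro i
      have h2 := hid (ys p i)
      rw [sigma_ys p σ hσsqrt] at h2
      by_contra hodd
      have hodd' : Odd (ofLex g i) := Int.not_even_iff_odd.1 hodd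
      rw [hodd'.neg_one_zpow] at h2
      have h2' : -(ys p i) = ys p i := by rw [neg_eq_neg_one_mul]; exact h2
      have h3 : ys p i + ys p i = 0 := by
        calc ys p i + ys p i = ys p i + -(ys p i) := by rw [h2']
          _ = 0 := add_neg_cancel _
      have h4 : (2 : sqrtField p) * ys p i = 0 := by rw [two_mul]; exact h3
      rcases mul_eq_zero.1 h4 with h5 | h5
      · exact two_ne_zero h5
      · exact ys_ne_zero p hp i h5
    refine ⟨Finsupp.mapRange (fun z => z / 2) (by norm_num) (ofLex g), ?_⟩
    ext i
    rw [Finsupp.add_apply, Finsupp.mapRange_apply]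
    obtain ⟨r, hr⟩ := heven i
    rw [hr]
    omega
  · intro hprop β
    apply HahnSeries.coeff_inj.1
    funext g
    rw [tmul_coeff, tmul_coeff]
    have hL : ∀ ij ∈ Finset.antidiagonal α.isPWO_support β.isPWO_support g,
        α.coeff ij.1 * σ (ofLex ij.1) (β.coeff ij.2) = α.coeff ij.1 * β.coeff ij.2 := by
      intro ij hij
      rw [Finset.mem_antidiagonal] at hij
      obtain ⟨⟨h', hh'⟩, -⟩ := hprop ij.1 hij.1
      rw [hh', sigma_even p σ hσsqrt h']
    have hR : ∀ ij ∈ Finset.antidiagonal β.isPWO_support α.isPWO_support g,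
        β.coeff ij.1 * σ (ofLex ij.1) (α.coeff ij.2) = β.coeff ij.1 * α.coeff ij.2 := by
      intro ij hij
      rw [Finset.mem_antidiagonal] at hij
      obtain ⟨-, q, hq⟩ := hprop ij.2 hij.2.1
      rw [hq, hσQ]
    rw [Finset.sum_congr rfl hL, Finset.sum_congr rfl hR]
    refine Finset.sum_nbij' (fun ij => ij.swap) (fun ij => ij.swap) ?_ ?_ ?_ ?_ ?_
    · intro ij hij
      rw [Finset.mem_antidiagonal] at hij ⊢
      exact ⟨hij.2.1, hij.1, by rw [add_comm]; exact hij.2.2⟩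
    · intro ij hij
      rw [Finset.mem_antidiagonal] at hij ⊢
      exact ⟨hij.2.1, hij.1, by rw [add_comm]; exact hij.2.2⟩
    · intro ij _; rfl
    · intro ij _; rfl
    · intro ij _
      show α.coeff ij.1 * β.coeff ij.2 = β.coeff ij.2 * α.coeff ij.1
      ring


end
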